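/- arXiv:1701.00637 — 2 statements merged into one kernel-verified Lean document; each statement's English description precedes it below -/
import Mathlib

section
/- Every lambda term M β-reduces to its Takahashi translation M*, and moreover there is a reduction sequence M →^l M* with l ≤ (1/2)|M| − 1 whenever |M| ≥ 4. -/
inductive Lam : Type
  | var : ℕ → Lam
  | lam : Lam → Lam
  | app : Lam → Lam → Lam
  deriving DecidableEq

namespace Lam

/-- term size -/
def size : Lam → ℕ
  | var _ => 1
  | lam M => 1 + M.size
  | app M N => 1 + M.size + N.size

/-- lift (shift) free variables ≥ d by 1 -/
def lift (d : ℕ) : Lam → Lam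
  | var n => if n < d then var n else var (n+1)
  | lam M => lam (M.lift (d+1))
  | app M N => app (M.lift d) (N.lift d)

/-- capture-avoiding substitution of N for the free variable x (de Bruijn) -/
def subst : Lam → ℕ → Lam → Lam
  | var n, x, N => if n = x then N else if x < n then var (n-1) else var n
  | lam M, x, N => lam (M.subst (x+1) (N.lift 0))
  | app M P, x, N => app (M.subst x N) (P.subst x N)

/-- number of free occurrences of the variable x -/
def count : Lam → ℕ → ℕ
  | var n, x => if n = x then 1 else 0
  | lam M, x => M.count (x+1)
  | app M N, x => M.count x + N.count x

/-- one-step β-reduction -/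
inductive Step : Lam → Lam → Prop
  | beta (M N : Lam) : Step (app (lam M) N) (M.subst 0 N)
  | appL {M M' : Lam} (N : Lam) : Step M M' → Step (app M N) (app M' N)
  | appR (M : Lam) {N N' : Lam} : Step N N' → Step (app M N) (app M N')
  | abs {M M' : Lam} : Step M M' → Step (lam M) (lam M')

/-- many-step β-reduction (reflexive-transitive closure) -/
def Red : Lam → Lam → Prop := Relation.ReflTransGen Step

/-- n-step β-reduction -/
def Steps : ℕ → Lam → Lam → Prop
  | 0, M, N => M = N
  | n+1, M, N => ∃ P, Step M P ∧ Steps n P N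

/-- Takahashi translation (Gross-Knuth complete development) -/
def star : Lam → Lam
  | var n => var n
  | lam M => lam (star M)
  | app (lam M) N => (star M).subst 0 (star N)
  | app (var n) N => app (var n) (star N)
  | app (app M₁ M₂) N => app (star (app M₁ M₂)) (star N)

/-- iterated Takahashi translation M^(n*) -/
def iterStar (n : ℕ) (M : Lam) : Lam := star^[n] M

end Lam
namespace Lam

lemma steps_trans {m n : ℕ} {M P N : Lam} (h1 : Steps m M P) (h2 : Steps n P N) :
    Steps (m + n) M N := by
  induction m generalizing M with
  | zero => cases h1; simpa using h2
  | succ k ih =>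
    obtain ⟨Q, hQ, hrest⟩ := h1
    rw [Nat.add_right_comm]
    exact ⟨Q, hQ, ih hrest⟩

lemma steps_appL {l : ℕ} {M M' : Lam} (N : Lam) (h : Steps l M M') :
    Steps l (app M N) (app M' N) := by
  induction l generalizing M with
  | zero => cases h; rfl
  | succ k ih => obtain ⟨Q, hQ, hr⟩ := h; exact ⟨app Q N, Step.appL N hQ, ih hr⟩

lemma steps_appR {l : ℕ} (M : Lam) {N N' : Lam} (h : Steps l N N') :
    Steps l (app M N) (app M N') := by
  induction l generalizing N with
  | zero => cases h; rfl
  | succ k ih => obtain ⟨Q, hQ, hr⟩ := h; exact ⟨app M Q, Step.appR M hQ, ih hr⟩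

lemma steps_abs {l : ℕ} {M M' : Lam} (h : Steps l M M') :
    Steps l (lam M) (lam M') := by
  induction l generalizing M with
  | zero => cases h; rfl
  | succ k ih => obtain ⟨Q, hQ, hr⟩ := h; exact ⟨lam Q, Step.abs hQ, ih hr⟩

lemma steps_red {l : ℕ} {M N : Lam} (h : Steps l M N) : Red M N := by
  induction l generalizing M with
  | zero => cases h; exact Relation.ReflTransGen.refl
  | succ k ih =>
    obtain ⟨Q, hQ, hr⟩ := h
    exact Relation.ReflTransGen.head hQ (ih hr)

lemma one_le_size (M : Lam) : 1 ≤ M.size := by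
  cases M with
  | var n => simp [size]
  | lam M => simp [size]
  | app M N => simp [size]; omega

lemma key (M : Lam) : ∃ l : ℕ, Steps l M M.star ∧ 2 * l + 1 ≤ M.size ∧
    (2 ≤ M.size → 2 * l + 2 ≤ M.size) := by
  induction M with
  | var n => exact ⟨0, rfl, by simp [size, star], by simp [size]⟩
  | lam M ih =>
    obtain ⟨l, hs, h1, _⟩ := ih
    exact ⟨l, steps_abs hs, by simp [size]; omega, by simp [size]; omega⟩
  | app M N ihM ihN =>
    obtain ⟨lM, hsM, h1M, h2M⟩ := ihM
    obtain ⟨lN, hsN, h1N, _⟩ := ihN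
    cases M with
    | var n =>
      refine ⟨lN, ?_, ?_, ?_⟩
      · have := steps_appR (var n) hsN
        simpa [star] using this
      · simp [size] at h1N ⊢; omega
      · simp [size] at h1N ⊢; omega
    | lam P =>
      refine ⟨lM + lN + 1, ?_, ?_, ?_⟩
      · have s1 : Steps lM (app (lam P) N) (app (lam P).star N) := steps_appL N hsM
        have s2 : Steps lN (app (lam P).star N) (app (lam P).star N.star) :=
          steps_appR _ hsN
        have s3 : Steps 1 (app (lam P).star N.star) ((app (lam P) N).star) := by
          refine ⟨P.star.subst 0 N.star, ?_, rfl⟩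
          show Step (app (lam P).star N.star) _
          rw [show (lam P).star = lam P.star from rfl]
          exact Step.beta _ _
        exact steps_trans (steps_trans s1 s2) s3
      · have h2M' := h2M (by have := one_le_size P; simp [size]; omega)
        simp [size] at h2M' h1N ⊢; omega
      · have h2M' := h2M (by have := one_le_size P; simp [size]; omega)
        simp [size] at h2M' h1N ⊢; omega
    | app A B =>
      refine ⟨lM + lN, ?_, ?_, ?_⟩
      · have s1 : Steps lM (app (app A B) N) (app (app A B).star N) := steps_appL N hsM
        have s2 : Steps lN (app (app A B).star N) (app (app A B).star N.star) :=
          steps_appR _ hsN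
        exact steps_trans s1 s2
      · simp [size] at h1M h1N ⊢; omega
      · simp [size] at h1M h1N ⊢; omega

end Lam

/-- M reduces to M*, within (1/2)|M| − 1 steps when |M| ≥ 4 -/
theorem red_star (M : Lam) :
    Lam.Red M M.star ∧
      ∃ l : ℕ, Lam.Steps l M M.star ∧ (4 ≤ M.size → (l : ℚ) ≤ (M.size : ℚ) / 2 - 1) := by
  obtain ⟨l, hs, h1, h2⟩ := Lam.key M
  refine ⟨Lam.steps_red hs, l, hs, fun h4 => ?_⟩
  have h := h2 (by omega)
  have h' : (2 * l + 2 : ℚ) ≤ (M.size : ℚ) := by exact_mod_cast h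
  linarith
end

section
/- (Main lemma) Suppose M =β N via a zigzag of length k = l + r, where r is the number of forward reduction steps (→) and l is the number of backward steps (←) in the zigzag. Then N β-reduces to M^(r*) (the r-fold iterated Takahashi translation of M), and M β-reduces to N^(l*). -/
namespace Lam

theorem lift_lift (M : Lam) : ∀ i j : ℕ, i ≤ j →
    (M.lift j).lift i = (M.lift i).lift (j+1) := by
  induction M with
  | var n =>
    intro i j h
    simp only [lift]
    split_ifs <;> simp only [lift] <;> split_ifs <;>
      first | rfl | (exfalso; omega) | (congr 1; omega)
  | lam M ih =>
    intro i j h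
    simp only [lift]
    rw [ih (i+1) (j+1) (by omega)]
  | app M N ihM ihN =>
    intro i j h
    simp only [lift, ihM i j h, ihN i j h]

theorem lift_subst_low (M : Lam) : ∀ (N : Lam) (d x : ℕ), x ≤ d →
    (M.subst x N).lift d = (M.lift (d+1)).subst x (N.lift d) := by
  induction M with
  | var n =>
    intro N d x h
    simp only [subst, lift]
    split_ifs <;> simp only [subst, lift] <;> split_ifs <;>
      first | rfl | (exfalso; omega) | (congr 1; omega)
  | lam M ih =>
    intro N d x h
    simp only [subst, lift]
    rw [ih (N.lift 0) (d+1) (x+1) (by omega), lift_lift N 0 d (by omega)]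
  | app M P ihM ihP =>
    intro N d x h
    simp only [subst, lift, ihM N d x h, ihP N d x h]

theorem lift_subst_high (M : Lam) : ∀ (N : Lam) (d x : ℕ), d ≤ x →
    (M.subst x N).lift d = (M.lift d).subst (x+1) (N.lift d) := by
  induction M with
  | var n =>
    intro N d x h
    simp only [subst, lift]
    split_ifs <;> simp only [subst, lift] <;> split_ifs <;>
      first | rfl | (exfalso; omega) | (congr 1; omega)
  | lam M ih =>
    intro N d x h
    simp only [subst, lift]
    rw [ih (N.lift 0) (d+1) (x+1) (by omega), lift_lift N 0 d (by omega)]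
  | app M P ihM ihP =>
    intro N d x h
    simp only [subst, lift, ihM N d x h, ihP N d x h]

theorem subst_lift (M : Lam) : ∀ (N : Lam) (i : ℕ), (M.lift i).subst i N = M := by
  induction M with
  | var n =>
    intro N i
    simp only [lift]
    split_ifs <;> simp only [subst] <;> split_ifs <;>
      first | rfl | (exfalso; omega) | (congr 1; omega)
  | lam M ih =>
    intro N i
    simp only [lift, subst]
    rw [ih]
  | app M P ihM ihP =>
    intro N i
    simp only [lift, subst, ihM, ihP]

theorem subst_subst (M : Lam) : ∀ (N P : Lam) (i j : ℕ), i ≤ j →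
    (M.subst i P).subst j N = (M.subst (j+1) (N.lift i)).subst i (P.subst j N) := by
  induction M with
  | var n =>
    intro N P i j h
    simp only [subst]
    split_ifs <;> simp only [subst, subst_lift] <;> (try split_ifs) <;>
      first | rfl | (exfalso; omega) | (congr 1; omega)
  | lam M ih =>
    intro N P i j h
    simp only [subst]
    rw [ih (N.lift 0) (P.lift 0) (i+1) (j+1) (by omega), lift_lift N 0 i (by omega),
      lift_subst_high P N 0 j (by omega)]
  | app M Q ihM ihQ =>
    intro N P i j h
    simp only [subst, ihM N P i j h, ihQ N P i j h]

end Lam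

namespace Lam

/-- parallel reduction -/
inductive Par : Lam → Lam → Prop
  | var (n : ℕ) : Par (var n) (var n)
  | lam {M M' : Lam} : Par M M' → Par (lam M) (lam M')
  | app {M M' N N' : Lam} : Par M M' → Par N N' → Par (app M N) (app M' N')
  | beta {M M' N N' : Lam} : Par M M' → Par N N' →
      Par (app (lam M) N) (M'.subst 0 N')

theorem Par.refl : ∀ M : Lam, Par M M
  | .var n => .var n
  | .lam M => .lam (Par.refl M)
  | .app M N => .app (Par.refl M) (Par.refl N)

theorem Step.par {M N : Lam} (h : Step M N) : Par M N := by
  induction h with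
  | beta M N => exact Par.beta (Par.refl M) (Par.refl N)
  | appL N _ ih => exact Par.app ih (Par.refl N)
  | appR M _ ih => exact Par.app (Par.refl M) ih
  | abs _ ih => exact Par.lam ih

theorem Red.app_left {M M' : Lam} (N : Lam) (h : Red M M') :
    Red (app M N) (app M' N) :=
  Relation.ReflTransGen.lift (fun P => app P N) (fun _ _ s => Step.appL N s) _ _ h

theorem Red.app_right (M : Lam) {N N' : Lam} (h : Red N N') :
    Red (app M N) (app M N') :=
  Relation.ReflTransGen.lift (fun P => app M P) (fun _ _ s => Step.appR M s) _ _ h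

theorem Red.abs {M M' : Lam} (h : Red M M') : Red (lam M) (lam M') :=
  Relation.ReflTransGen.lift Lam.lam (fun _ _ s => Step.abs s) _ _ h

theorem Par.red {M N : Lam} (h : Par M N) : Red M N := by
  induction h with
  | var n => exact Relation.ReflTransGen.refl
  | lam _ ih => exact Red.abs ih
  | app _ _ ihM ihN => exact Relation.ReflTransGen.trans (Red.app_left _ ihM) (Red.app_right _ ihN)
  | beta _ _ ihM ihN =>
    refine Relation.ReflTransGen.tail (b := Lam.app (Lam.lam _) _) ?_ (Step.beta _ _)
    exact Relation.ReflTransGen.trans (Red.app_left _ (Red.abs ihM)) (Red.app_right _ ihN)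

theorem Par.lift {M M' : Lam} (h : Par M M') : ∀ d : ℕ, Par (M.lift d) (M'.lift d) := by
  induction h with
  | var n => intro d; simp only [Lam.lift]; split_ifs <;> exact Par.refl _
  | lam _ ih => intro d; exact Par.lam (ih (d+1))
  | app _ _ ihM ihN => intro d; exact Par.app (ihM d) (ihN d)
  | beta _ _ ihM ihN =>
    intro d
    simp only [Lam.lift]
    rw [lift_subst_low _ _ d 0 (by omega)]
    exact Par.beta (ihM (d+1)) (ihN d)

theorem Par.subst {M M' : Lam} (h : Par M M') :
    ∀ (x : ℕ) (N N' : Lam), Par N N' → Par (M.subst x N) (M'.subst x N') := by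
  induction h with
  | var n =>
    intro x N N' hN
    simp only [Lam.subst]
    split_ifs <;> first | exact hN | exact Par.refl _
  | lam _ ih =>
    intro x N N' hN
    exact Par.lam (ih (x+1) _ _ (hN.lift 0))
  | app _ _ ihM ihN =>
    intro x N N' hN
    exact Par.app (ihM x _ _ hN) (ihN x _ _ hN)
  | beta _ _ ihM ihP =>
    intro x N N' hN
    simp only [Lam.subst]
    rw [subst_subst _ _ _ 0 x (by omega)]
    exact Par.beta (ihM (x+1) _ _ (hN.lift 0)) (ihP x _ _ hN)

theorem Par.lam_inv {M B : Lam} (h : Par (Lam.lam M) B) : ∃ B', B = Lam.lam B' ∧ Par M B' := by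
  cases h with
  | lam h => exact ⟨_, rfl, h⟩

theorem Par.triangle {M N : Lam} (h : Par M N) : Par N (star M) := by
  induction h with
  | var n => exact Par.var n
  | lam _ ih => exact Par.lam ih
  | app hM hN ihM ihN =>
    rename_i M M' N N'
    match M, hM, ihM with
    | .var n, hM, ihM =>
      cases hM
      exact Par.app (Par.var n) ihN
    | .lam M₁, hM, ihM =>
      obtain ⟨M₁', rfl, _⟩ := hM.lam_inv
      obtain ⟨C, hC, hPar⟩ := ihM.lam_inv
      simp only [star]
      cases hC
      exact Par.beta hPar ihN
    | .app M₁ M₂, hM, ihM =>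
      exact Par.app ihM ihN
  | beta _ _ ihM ihN =>
    exact Par.subst ihM 0 _ _ ihN

theorem step_red_star {M N : Lam} (h : Step M N) : Red N (star M) :=
  (h.par.triangle).red

theorem red_self_star (M : Lam) : Red M (star M) :=
  ((Par.refl M).triangle).red

theorem star_par {M N : Lam} (h : Par M N) : Par (star M) (star N) :=
  h.triangle.triangle

theorem star_red {M N : Lam} (h : Red M N) : Red (star M) (star N) := by
  induction h with
  | refl => exact Relation.ReflTransGen.refl
  | tail _ hstep ih => exact Relation.ReflTransGen.trans ih (star_par hstep.par).red

theorem iterStar_red {M N : Lam} (h : Red M N) (n : ℕ) :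
    Red (iterStar n M) (iterStar n N) := by
  induction n with
  | zero => exact h
  | succ n ih =>
    simp only [iterStar, Function.iterate_succ_apply'] at *
    exact star_red ih

end Lam

/-- `Zig M l r N` : a β-conversion zigzag from M to N with l backward arrows (←)
and r forward arrows (→) -/
inductive Zig : Lam → ℕ → ℕ → Lam → Prop
  | refl (M : Lam) : Zig M 0 0 M
  | fwd {M P N : Lam} {l r : ℕ} : Lam.Step M P → Zig P l r N → Zig M l (r+1) N
  | bwd {M P N : Lam} {l r : ℕ} : Lam.Step P M → Zig P l r N → Zig M (l+1) r N

/-- main lemma: if M =β N via a zigzag with r forward and l backward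
arrows, then N ↠ M^(r*) and M ↠ N^(l*) -/
theorem main_lemma {M N : Lam} {l r : ℕ} (h : Zig M l r N) :
    Lam.Red N (Lam.iterStar r M) ∧ Lam.Red M (Lam.iterStar l N) := by
  induction h with
  | refl M => exact ⟨Relation.ReflTransGen.refl, Relation.ReflTransGen.refl⟩
  | fwd hstep hz ih =>
    rename_i M₀ P₀ N₀ l₀ r₀
    obtain ⟨ih1, ih2⟩ := ih
    constructor
    · refine Relation.ReflTransGen.trans ih1 ?_
      have h1 := Lam.iterStar_red (Lam.step_red_star hstep) r₀
      simpa only [Lam.iterStar, Function.iterate_succ_apply, Lam.Red] using h1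
    · exact Relation.ReflTransGen.trans (Relation.ReflTransGen.single hstep) ih2
  | bwd hstep _ ih =>
    obtain ⟨ih1, ih2⟩ := ih
    constructor
    · exact Relation.ReflTransGen.trans ih1
        (Lam.iterStar_red (Relation.ReflTransGen.single hstep) _)
    · refine Relation.ReflTransGen.trans (Lam.step_red_star hstep) ?_
      have h1 := Lam.star_red ih2
      simpa only [Lam.iterStar, Function.iterate_succ_apply', Lam.Red] using h1
end
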